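/- For a partial word u in {0,1,DIAMOND}^L, define enc(u) = e(u[1]) e(u[2]) ... e(u[L]) over the alphabet {0,1,#}, where e(0) = 0#, e(1) = 1#, and e(DIAMOND) = 01#. Then a word a_1 a_2 ... a_L in {0,1}^L is compatible with u if and only if a_1 # a_2 # ... a_L # is a subsequence of enc(u). -/

import Mathlib

open List

/-- The alphabet {0, 1, #}. -/
inductive Letter3 : Type
  | zero : Letter3
  | one : Letter3
  | hash : Letter3
deriving DecidableEq

/-- The letter of `Letter3` corresponding to a Boolean value. -/
def lit : Bool → Letter3
  | false => .zero
  | true => .one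

/-- The encoding of a symbol of a partial word (where `none` plays the role of `DIAMOND`):
`e(0) = 0#`, `e(1) = 1#`, `e(DIAMOND) = 01#`. -/
def e : Option Bool → List Letter3
  | some false => [.zero, .hash]
  | some true => [.one, .hash]
  | none => [.zero, .one, .hash]

lemma lit_ne_hash (b : Bool) : lit b ≠ .hash := by cases b <;> simp [lit]

lemma lit_inj {b c : Bool} (h : lit b = lit c) : b = c := by
  cases b <;> cases c <;> simp_all [lit]

lemma e_eq (o : Option Bool) : ∃ pre, (∀ x ∈ pre, x ≠ Letter3.hash) ∧
    e o = pre ++ [Letter3.hash] ∧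
    (∀ c, o = some c → pre = [lit c]) := by
  rcases o with _ | b
  · exact ⟨[.zero, .one], by simp, by simp [e], by simp⟩
  · exact ⟨[lit b], by simpa using lit_ne_hash b, by cases b <;> simp [e, lit],
      by intro c h; injection h with h; rw [h]⟩

lemma hash_sub {pre : List Letter3} (hpre : ∀ x ∈ pre, x ≠ Letter3.hash)
    {rest tail : List Letter3}
    (h : (Letter3.hash :: rest) <+ pre ++ Letter3.hash :: tail) : rest <+ tail := by
  induction pre with
  | nil =>
    cases h with
    | cons_cons _ h => exact h
    | cons _ h => exact (sublist_cons_self _ _).trans h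
  | cons x pre ih =>
    cases h with
    | cons_cons _ h => exact absurd rfl (hpre _ (by simp))
    | cons _ h => exact ih (fun y hy => hpre y (by simp [hy])) h

lemma block_sub {pre : List Letter3} (hpre : ∀ x ∈ pre, x ≠ Letter3.hash)
    {b : Bool} {rest tail : List Letter3}
    (hcount : count Letter3.hash tail ≤ count Letter3.hash rest)
    (h : (lit b :: Letter3.hash :: rest) <+ pre ++ Letter3.hash :: tail) :
    lit b ∈ pre ∧ rest <+ tail := by
  have hbh := lit_ne_hash b
  generalize hx : lit b = x at h ⊢
  induction pre with
  | nil =>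
    simp only [nil_append] at h
    cases h with
    | cons_cons _ h => exact absurd hx hbh
    | cons _ h =>
      have := h.count_le Letter3.hash
      simp [count_cons] at this
      omega
  | cons x pre ih =>
    cases h with
    | cons_cons _ h =>
      exact ⟨by simp, hash_sub (fun y hy => hpre y (by simp [hy])) h⟩
    | cons _ h =>
      obtain ⟨h1, h2⟩ := ih (fun y hy => hpre y (by simp [hy])) h
      exact ⟨by simp [h1], h2⟩

lemma count_flatten_a (l : List (Option Bool × Bool)) :
    count Letter3.hash (l.map fun p => [lit p.2, Letter3.hash]).flatten = l.length := by
  induction l with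
  | nil => rfl
  | cons p l ih =>
    simp [count_append, ih, count_cons, lit_ne_hash p.2]

lemma count_flatten_e (l : List (Option Bool × Bool)) :
    count Letter3.hash (l.map fun p => e p.1).flatten = l.length := by
  induction l with
  | nil => rfl
  | cons p l ih =>
    obtain ⟨pre, hpre, heq, -⟩ := e_eq p.1
    have : count Letter3.hash pre = 0 := by
      rw [count_eq_zero]; exact fun h => hpre _ h rfl
    simp [count_append, ih, heq, this]

lemma list_version (l : List (Option Bool × Bool)) :
    (∀ p ∈ l, ∀ c : Bool, p.1 = some c → p.2 = c) ↔
      (l.map fun p => [lit p.2, Letter3.hash]).flatten <+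
        (l.map fun p => e p.1).flatten := by
  induction l with
  | nil => simp
  | cons p l ih =>
    constructor
    · intro h
      simp only [map_cons, flatten_cons]
      refine Sublist.append ?_ (ih.1 fun q hq => h q (by simp [hq]))
      rcases hp : p.1 with _ | c
      · cases p.2 <;> simp [e, lit]
      · have : p.2 = c := h p (by simp) c hp
        rcases c <;> simp [this, e, lit]
    · intro h
      simp only [map_cons, flatten_cons] at h
      obtain ⟨pre, hpre, heq, hsome⟩ := e_eq p.1
      rw [heq, append_assoc] at h
      simp only [singleton_append] at h
      have hcount : count Letter3.hash ((l.map fun p => e p.1).flatten) ≤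
          count Letter3.hash ((l.map fun p => [lit p.2, Letter3.hash]).flatten) := by
        rw [count_flatten_a, count_flatten_e]
      obtain ⟨hmem, hsub⟩ := block_sub hpre hcount h
      intro q hq c hc
      rcases mem_cons.1 hq with rfl | hq
      · rw [hsome c hc] at hmem
        exact lit_inj (by simpa using hmem)
      · exact (ih.2 hsub) q hq c hc

/-- A word `a_1 ... a_L ∈ {0,1}^L` is compatible with a partial word
`u ∈ {0,1,DIAMOND}^L` iff `a_1 # a_2 # ... a_L #` is a subsequence of
`enc(u) = e(u[1]) ... e(u[L])`. -/
theorem compatible_iff_sublist_enc {L : ℕ} (u : Fin L → Option Bool) (a : Fin L → Bool) :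
    (∀ j : Fin L, ∀ c : Bool, u j = some c → a j = c) ↔
      (List.ofFn (fun j => [lit (a j), Letter3.hash])).flatten <+
        (List.ofFn (fun j => e (u j))).flatten := by
  have := list_version (List.ofFn fun j => (u j, a j))
  rw [List.map_ofFn, List.map_ofFn] at this
  simp only [Function.comp_def] at this
  rw [← this]
  constructor
  · intro h p hp c hc
    obtain ⟨j, rfl⟩ := List.mem_ofFn.1 hp
    exact h j c hc
  · intro h j c hc
    exact h (u j, a j) (List.mem_ofFn.2 ⟨j, rfl⟩) c hc
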